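/- Let V be an N×M complex matrix, let l : {1,…,N} → {1,…,M} be any function (repetitions allowed), and let x be a real number. Then Σ_{σ_1,σ_2 ∈ S_N} x^{N − fix(σ_1σ_2^{-1})} ∏_{k=1}^{N} conj(V_{σ_1(k), l(k)}) · V_{σ_2(k), l(k)} = Σ_{n=0}^{N} x^n (1−x)^{N−n} Σ_{K} Σ_{J} |per V(K | l(J))|² · per W(K^c | J^c), where K and J range over all n-element subsets of {1,…,N}, V(K | l(J)) is the n×n matrix with rows k ∈ K and columns l(j) for j ∈ J, W is the N×N real matrix with entries W_{i,j} = |V_{i, l(j)}|², and W(K^c|J^c) is its submatrix on rows K^c and columns J^c. -/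

import Mathlib

open Finset

set_option maxHeartbeats 1000000

/-- Permanent of the submatrix of `A` on the row set `K` and the column set `J`:
the sum over all bijections `e : K ≃ J` of `∏_{i ∈ K} A i (e i)`.
When `K.card = J.card = n` this is exactly the permanent of the `n × n` submatrix
`A(K|J)`; for `K = J = ∅` it equals `1` (the permanent of the empty matrix). -/
noncomputable def permOn {α β R : Type*} [DecidableEq α] [DecidableEq β] [CommRing R]
    (A : α → β → R) (K : Finset α) (J : Finset β) : R :=
  ∑ e : {x // x ∈ K} ≃ {y // y ∈ J}, ∏ i : {x // x ∈ K}, A i (e i)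

/-- The number of fixed points of a permutation. -/
def fixCount {N : ℕ} (σ : Equiv.Perm (Fin N)) : ℕ :=
  (Finset.univ.filter fun i => σ i = i).card

variable {α : Type*} [Fintype α] [DecidableEq α]

/-- Equiv between `{x // x ∉ S}` and the coe-sort of `Sᶜ`. -/
def toComplEquiv (S : Finset α) : {x // x ∉ S} ≃ {x // x ∈ Sᶜ} :=
  Equiv.subtypeEquivRight fun _ => (Finset.mem_compl).symm

/-- Glue a bijection `J ≃ K` and a bijection `Jᶜ ≃ Kᶜ` into a permutation of `α`. -/
def glue (J K : Finset α) (e1 : {x // x ∈ J} ≃ {x // x ∈ K})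
    (e0 : {x // x ∈ Jᶜ} ≃ {x // x ∈ Kᶜ}) : Equiv.Perm α :=
  (Equiv.sumCompl (· ∈ J)).symm.trans
    ((e1.sumCongr ((toComplEquiv J).trans (e0.trans (toComplEquiv K).symm))).trans
      (Equiv.sumCompl (· ∈ K)))

lemma glue_apply_of_mem {J K : Finset α} (e1 : {x // x ∈ J} ≃ {x // x ∈ K})
    (e0 : {x // x ∈ Jᶜ} ≃ {x // x ∈ Kᶜ}) {k : α} (h : k ∈ J) :
    glue J K e1 e0 k = (e1 ⟨k, h⟩ : α) := by
  simp [glue, Equiv.sumCompl_symm_apply_of_pos h]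

lemma glue_apply_of_not_mem {J K : Finset α} (e1 : {x // x ∈ J} ≃ {x // x ∈ K})
    (e0 : {x // x ∈ Jᶜ} ≃ {x // x ∈ Kᶜ}) {k : α} (h : k ∉ J) :
    glue J K e1 e0 k = (e0 ⟨k, Finset.mem_compl.mpr h⟩ : α) := by
  simp only [glue, Equiv.trans_apply, Equiv.sumCompl_symm_apply_of_neg h,
    Equiv.sumCongr_apply, Sum.map_inr, toComplEquiv, Equiv.subtypeEquivRight_apply]
  rfl

/-- Restriction of a permutation to a bijection between `J` and `K`. -/
def restr (σ : Equiv.Perm α) (J K : Finset α) (h : ∀ k, k ∈ J ↔ σ k ∈ K) :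
    {x // x ∈ J} ≃ {x // x ∈ K} where
  toFun k := ⟨σ k, (h k).mp k.2⟩
  invFun y := ⟨σ.symm y, (h _).mpr (by simp [y.2])⟩
  left_inv k := by ext; simp
  right_inv y := by ext; simp

lemma image_iff {σ : Equiv.Perm α} {J K : Finset α} (h : J.image σ = K) :
    ∀ k, k ∈ J ↔ σ k ∈ K := by
  intro k
  constructor
  · intro hk; rw [← h]; exact Finset.mem_image_of_mem σ hk
  · intro hk
    rw [← h] at hk
    obtain ⟨j, hj, hjk⟩ := Finset.mem_image.mp hk
    cases σ.injective hjk
    exact hj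

lemma image_iff_compl {σ : Equiv.Perm α} {J K : Finset α} (h : J.image σ = K) :
    ∀ k, k ∈ Jᶜ ↔ σ k ∈ Kᶜ := by
  intro k
  simpa only [Finset.mem_compl] using (image_iff h k).not

lemma glue_image {J K : Finset α} (e1 : {x // x ∈ J} ≃ {x // x ∈ K})
    (e0 : {x // x ∈ Jᶜ} ≃ {x // x ∈ Kᶜ}) : J.image (glue J K e1 e0) = K := by
  apply Finset.eq_of_subset_of_card_le
  · intro y hy
    obtain ⟨k, hk, rfl⟩ := Finset.mem_image.mp hy
    rw [glue_apply_of_mem e1 e0 hk]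
    exact (e1 ⟨k, hk⟩).2
  · rw [Finset.card_image_of_injective _ (glue J K e1 e0).injective]
    rw [← Fintype.card_coe J, ← Fintype.card_coe K]
    exact le_of_eq (Fintype.card_congr e1.symm)

lemma fiber_eq {R : Type*} [CommRing R] (J K : Finset α)
    (p : {x // x ∈ J} → α → R) (q : {x // x ∈ Jᶜ} → α → R) :
    ∑ σ ∈ Finset.univ.filter (fun σ : Equiv.Perm α => J.image σ = K),
        (∏ k : {x // x ∈ J}, p k (σ k)) * ∏ k : {x // x ∈ Jᶜ}, q k (σ k)
      = ∑ e1 : {x // x ∈ J} ≃ {x // x ∈ K}, ∑ e0 : {x // x ∈ Jᶜ} ≃ {x // x ∈ Kᶜ},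
          (∏ k, p k (e1 k)) * (∏ k, q k (e0 k)) := by
  refine Eq.trans ?_ (Fintype.sum_prod_type
    (f := fun z : ({x // x ∈ J} ≃ {x // x ∈ K}) × ({x // x ∈ Jᶜ} ≃ {x // x ∈ Kᶜ}) =>
      (∏ k, p k (z.1 k)) * (∏ k, q k (z.2 k))))
  refine Finset.sum_bij' (fun σ hσ =>
      (restr σ J K (image_iff (Finset.mem_filter.mp hσ).2),
       restr σ Jᶜ Kᶜ (image_iff_compl (Finset.mem_filter.mp hσ).2)))
    (fun z _ => glue J K z.1 z.2) ?_ ?_ ?_ ?_ ?_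
  · intro σ hσ; exact Finset.mem_univ _
  · intro z _
    exact Finset.mem_filter.mpr ⟨Finset.mem_univ _, glue_image z.1 z.2⟩
  · intro σ hσ
    ext k
    by_cases hk : k ∈ J
    · rw [glue_apply_of_mem _ _ hk]; rfl
    · rw [glue_apply_of_not_mem _ _ hk]; rfl
  · intro z hz
    refine Prod.ext ?_ ?_
    · ext k
      simp only [restr, Equiv.coe_fn_mk]
      rw [glue_apply_of_mem z.1 z.2 k.2]
    · ext k
      simp only [restr, Equiv.coe_fn_mk]
      rw [glue_apply_of_not_mem z.1 z.2 (Finset.mem_compl.mp k.2)]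
  · intro σ hσ
    rfl

lemma sum_perm_decompose {R : Type*} [CommRing R] (J : Finset α)
    (p : {x // x ∈ J} → α → R) (q : {x // x ∈ Jᶜ} → α → R) :
    ∑ σ : Equiv.Perm α,
        (∏ k : {x // x ∈ J}, p k (σ k)) * ∏ k : {x // x ∈ Jᶜ}, q k (σ k)
      = ∑ K ∈ Finset.powersetCard J.card (Finset.univ : Finset α),
          ∑ e1 : {x // x ∈ J} ≃ {x // x ∈ K}, ∑ e0 : {x // x ∈ Jᶜ} ≃ {x // x ∈ Kᶜ},
            (∏ k, p k (e1 k)) * (∏ k, q k (e0 k)) := by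
  rw [← Finset.sum_fiberwise_of_maps_to (g := fun σ : Equiv.Perm α => J.image σ)
    (t := Finset.powersetCard J.card (Finset.univ : Finset α))
    (fun σ _ => Finset.mem_powersetCard_univ.mpr
      (Finset.card_image_of_injective _ σ.injective))]
  exact Finset.sum_congr rfl fun K _ => fiber_eq J K p q

lemma sum_perm_agree {R : Type*} [CommRing R] (σ₁ : Equiv.Perm α) (J : Finset α)
    (u : {x // x ∈ Jᶜ} → R) (b : {x // x ∈ J} → α → R) :
    ∑ σ₂ : Equiv.Perm α,
        (∏ k : {x // x ∈ Jᶜ}, if σ₁ k = σ₂ k then u k else 0) *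
          ∏ k : {x // x ∈ J}, b k (σ₂ k)
      = (∏ k : {x // x ∈ Jᶜ}, u k) *
          ∑ π : Equiv.Perm {x // x ∈ J}, ∏ k : {x // x ∈ J}, b k (σ₁ (π k)) := by
  rw [← Fintype.sum_equiv (Equiv.mulLeft σ₁)
    (fun ρ => (∏ k : {x // x ∈ Jᶜ}, if σ₁ k = (σ₁ * ρ) k then u k else 0) *
      ∏ k : {x // x ∈ J}, b k ((σ₁ * ρ) k))
    (fun σ₂ => (∏ k : {x // x ∈ Jᶜ}, if σ₁ k = σ₂ k then u k else 0) *
      ∏ k : {x // x ∈ J}, b k (σ₂ k)) (fun ρ => rfl)]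
  have hcond : ∀ (ρ : Equiv.Perm α) (k : α), (σ₁ k = (σ₁ * ρ) k) ↔ ρ k = k := by
    intro ρ k
    simp only [Equiv.Perm.mul_apply]
    exact ⟨fun h => (σ₁.injective h).symm, fun h => by rw [h]⟩
  have hsplit := Finset.sum_filter_add_sum_filter_not (Finset.univ : Finset (Equiv.Perm α))
    (fun ρ => ∀ k ∈ Jᶜ, ρ k = k)
    (fun ρ => (∏ k : {x // x ∈ Jᶜ}, if σ₁ k = (σ₁ * ρ) k then u k else 0) *
      ∏ k : {x // x ∈ J}, b k ((σ₁ * ρ) k))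
  rw [← hsplit]
  have hzero : ∑ ρ ∈ Finset.univ.filter (fun ρ : Equiv.Perm α => ¬ ∀ k ∈ Jᶜ, ρ k = k),
      (∏ k : {x // x ∈ Jᶜ}, if σ₁ k = (σ₁ * ρ) k then u k else 0) *
        ∏ k : {x // x ∈ J}, b k ((σ₁ * ρ) k) = 0 := by
    refine Finset.sum_eq_zero fun ρ hρ => ?_
    obtain ⟨k, hk, hne⟩ := by
      simpa using (Finset.mem_filter.mp hρ).2
    have : (∏ k : {x // x ∈ Jᶜ}, if σ₁ k = (σ₁ * ρ) k then u k else 0) = 0 := by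
      refine Finset.prod_eq_zero (Finset.mem_univ (⟨k, Finset.mem_compl.mpr hk⟩ : {x // x ∈ Jᶜ})) ?_
      rw [if_neg]
      rw [hcond]
      exact hne
    rw [this, zero_mul]
  rw [hzero, add_zero]
  rw [Finset.mul_sum]
  refine Finset.sum_bij' (fun ρ hρ => restr ρ J J ?_)
    (fun π _ => glue J J π (Equiv.refl _)) ?_ ?_ ?_ ?_ ?_
  · -- iff
    have hfix : ∀ k ∈ Jᶜ, ρ k = k := (Finset.mem_filter.mp hρ).2
    intro k
    constructor
    · intro hk
      by_contra hnk
      have h1 : ρ (ρ k) = ρ k := hfix _ (Finset.mem_compl.mpr hnk)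
      have := ρ.injective h1
      rw [this] at hnk
      exact hnk hk
    · intro hk
      by_contra hnk
      have : ρ k = k := hfix _ (Finset.mem_compl.mpr hnk)
      rw [this] at hk
      exact hnk hk
  · intro ρ hρ; exact Finset.mem_univ _
  · intro π _
    refine Finset.mem_filter.mpr ⟨Finset.mem_univ _, fun k hk => ?_⟩
    rw [glue_apply_of_not_mem _ _ (Finset.mem_compl.mp hk)]
    rfl
  · intro ρ hρ
    ext k
    by_cases hk : k ∈ J
    · rw [glue_apply_of_mem _ _ hk]; rfl
    · rw [glue_apply_of_not_mem _ _ hk]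
      exact ((Finset.mem_filter.mp hρ).2 k (Finset.mem_compl.mpr hk)).symm
  · intro π _
    ext k
    simp only [restr, Equiv.coe_fn_mk]
    rw [glue_apply_of_mem _ _ k.2]
  · intro ρ hρ
    have hfix : ∀ k ∈ Jᶜ, ρ k = k := (Finset.mem_filter.mp hρ).2
    have h1 : (∏ k : {x // x ∈ Jᶜ}, if σ₁ k = (σ₁ * ρ) k then u k else 0)
        = ∏ k : {x // x ∈ Jᶜ}, u k := by
      refine Finset.prod_congr rfl fun k _ => ?_
      rw [if_pos]
      rw [hcond]
      exact hfix k k.2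
    rw [h1]
    rfl

/-- Right-translation on equivalences. -/
def transEquiv {A B : Type*} (e1 : A ≃ B) : Equiv.Perm A ≃ (A ≃ B) where
  toFun π := π.trans e1
  invFun e := e.trans e1.symm
  left_inv π := by ext k; simp
  right_inv e := by ext k; simp

lemma core {R : Type*} [CommRing R] (J : Finset α) (a b w : α → α → R) :
    ∑ σ₁ : Equiv.Perm α, ∑ σ₂ : Equiv.Perm α,
        (∏ k : {x // x ∈ J}, a k (σ₁ k) * b k (σ₂ k)) *
          (∏ k : {x // x ∈ Jᶜ}, if σ₁ k = σ₂ k then w k (σ₁ k) else 0)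
      = ∑ K ∈ Finset.powersetCard J.card (Finset.univ : Finset α),
          (∑ e : {x // x ∈ J} ≃ {x // x ∈ K}, ∏ k : {x // x ∈ J}, a k (e k)) *
          (∑ e : {x // x ∈ J} ≃ {x // x ∈ K}, ∏ k : {x // x ∈ J}, b k (e k)) *
          (∑ e : {x // x ∈ Jᶜ} ≃ {x // x ∈ Kᶜ}, ∏ k : {x // x ∈ Jᶜ}, w k (e k)) := by
  -- step 1: do the σ₂ sum
  have step1 : ∀ σ₁ : Equiv.Perm α,
      ∑ σ₂ : Equiv.Perm α,
        (∏ k : {x // x ∈ J}, a k (σ₁ k) * b k (σ₂ k)) *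
          (∏ k : {x // x ∈ Jᶜ}, if σ₁ k = σ₂ k then w k (σ₁ k) else 0)
      = ∑ π : Equiv.Perm {x // x ∈ J},
          ((∏ k : {x // x ∈ J}, a k (σ₁ k) * b (π.symm k) (σ₁ k)) *
            ∏ k : {x // x ∈ Jᶜ}, w k (σ₁ k)) := by
    intro σ₁
    have := sum_perm_agree σ₁ J (fun k : {x // x ∈ Jᶜ} => w k (σ₁ k)) (fun (k : {x // x ∈ J}) i => b k i)
    calc ∑ σ₂ : Equiv.Perm α,
        (∏ k : {x // x ∈ J}, a k (σ₁ k) * b k (σ₂ k)) *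
          (∏ k : {x // x ∈ Jᶜ}, if σ₁ k = σ₂ k then w k (σ₁ k) else 0)
        = (∏ k : {x // x ∈ J}, a k (σ₁ k)) *
            ∑ σ₂ : Equiv.Perm α,
              (∏ k : {x // x ∈ Jᶜ}, if σ₁ k = σ₂ k then w k (σ₁ k) else 0) *
                ∏ k : {x // x ∈ J}, b k (σ₂ k) := by
          rw [Finset.mul_sum]
          refine Finset.sum_congr rfl fun σ₂ _ => ?_
          rw [Finset.prod_mul_distrib]
          ring
      _ = (∏ k : {x // x ∈ J}, a k (σ₁ k)) *
            ((∏ k : {x // x ∈ Jᶜ}, w k (σ₁ k)) *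
              ∑ π : Equiv.Perm {x // x ∈ J}, ∏ k : {x // x ∈ J}, b k (σ₁ (π k))) := by
          rw [this]
      _ = ∑ π : Equiv.Perm {x // x ∈ J},
            ((∏ k : {x // x ∈ J}, a k (σ₁ k) * b (π.symm k) (σ₁ k)) *
              ∏ k : {x // x ∈ Jᶜ}, w k (σ₁ k)) := by
          rw [Finset.mul_sum, Finset.mul_sum]
          refine Finset.sum_congr rfl fun π _ => ?_
          have hre : (∏ k : {x // x ∈ J}, b (π.symm k) (σ₁ k))
              = ∏ k : {x // x ∈ J}, b k (σ₁ (π k)) := by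
            rw [← Equiv.prod_comp π (fun k => b (π.symm k) (σ₁ k))]
            simp
          rw [Finset.prod_mul_distrib, hre]
          ring
  simp only [step1]
  rw [Finset.sum_comm]
  have step2 : ∀ π : Equiv.Perm {x // x ∈ J},
      ∑ σ₁ : Equiv.Perm α,
        ((∏ k : {x // x ∈ J}, a k (σ₁ k) * b (π.symm k) (σ₁ k)) *
          ∏ k : {x // x ∈ Jᶜ}, w k (σ₁ k))
      = ∑ K ∈ Finset.powersetCard J.card (Finset.univ : Finset α),
          ∑ e1 : {x // x ∈ J} ≃ {x // x ∈ K},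
            ((∏ k : {x // x ∈ J}, a k (e1 k)) *
              ∏ k : {x // x ∈ J}, b k ((π.trans e1) k)) *
            ∑ e0 : {x // x ∈ Jᶜ} ≃ {x // x ∈ Kᶜ}, ∏ k : {x // x ∈ Jᶜ}, w k (e0 k) := by
    intro π
    rw [sum_perm_decompose J (fun (k : {x // x ∈ J}) i => a k i * b (π.symm k) i) (fun (k : {x // x ∈ Jᶜ}) i => w k i)]
    refine Finset.sum_congr rfl fun K _ => Finset.sum_congr rfl fun e1 _ => ?_
    rw [← Finset.mul_sum]
    congr 1
    rw [Finset.prod_mul_distrib]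
    congr 1
    rw [← Equiv.prod_comp π (fun k => b (π.symm k) ((e1 k : α)))]
    refine Finset.prod_congr rfl fun k _ => ?_
    simp [Equiv.trans_apply]
  simp only [step2]
  rw [Finset.sum_comm]
  refine Finset.sum_congr rfl fun K _ => ?_
  rw [Finset.sum_comm]
  calc ∑ e1 : {x // x ∈ J} ≃ {x // x ∈ K}, ∑ π : Equiv.Perm {x // x ∈ J},
        ((∏ k : {x // x ∈ J}, a k (e1 k)) *
          ∏ k : {x // x ∈ J}, b k ((π.trans e1) k)) *
        ∑ e0 : {x // x ∈ Jᶜ} ≃ {x // x ∈ Kᶜ}, ∏ k : {x // x ∈ Jᶜ}, w k (e0 k)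
      = ∑ e1 : {x // x ∈ J} ≃ {x // x ∈ K},
          ((∏ k : {x // x ∈ J}, a k (e1 k)) *
            ∑ e2 : {x // x ∈ J} ≃ {x // x ∈ K}, ∏ k : {x // x ∈ J}, b k (e2 k)) *
          ∑ e0 : {x // x ∈ Jᶜ} ≃ {x // x ∈ Kᶜ}, ∏ k : {x // x ∈ Jᶜ}, w k (e0 k) := by
        refine Finset.sum_congr rfl fun e1 _ => ?_
        rw [← Finset.sum_mul, ← Finset.mul_sum]
        congr 2
        exact Fintype.sum_equiv (transEquiv e1)
          (fun π => ∏ k : {x // x ∈ J}, b k ((π.trans e1) k))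
          (fun e2 => ∏ k : {x // x ∈ J}, b k (e2 k)) (fun π => rfl)
    _ = _ := by
        rw [Finset.sum_mul, Finset.sum_mul]

/-- Symmetrization equivalence on equivalences. -/
def symmEquiv {A B : Type*} : (A ≃ B) ≃ (B ≃ A) where
  toFun := Equiv.symm
  invFun := Equiv.symm
  left_inv e := e.symm_symm
  right_inv e := e.symm_symm

lemma sum_equiv_prod_eq {R : Type*} [CommRing R] (K J : Finset α) (g : α → α → R) :
    ∑ e : {x // x ∈ J} ≃ {x // x ∈ K}, ∏ k : {x // x ∈ J}, g (e k) k
      = permOn g K J := by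
  rw [permOn]
  refine Fintype.sum_equiv symmEquiv _ _ fun e => ?_
  have h := Equiv.prod_comp e (fun i : {x // x ∈ K} => g i (e.symm i))
  simp only [Equiv.symm_apply_apply] at h
  exact h

lemma permOn_map {R S : Type*} [CommRing R] [CommRing S] (f : R →+* S)
    (A : α → α → R) (K J : Finset α) :
    f (permOn A K J) = permOn (fun i j => f (A i j)) K J := by
  simp [permOn, map_sum, map_prod]

lemma conj_mul_self (z : ℂ) : (starRingEnd ℂ) z * z = ((‖z‖ ^ 2 : ℝ) : ℂ) := by
  rw [mul_comm, Complex.mul_conj]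
  simp [Complex.normSq_eq_norm_sq]

lemma fixCount_eq {N : ℕ} (σ₁ σ₂ : Equiv.Perm (Fin N)) :
    fixCount (σ₁ * σ₂⁻¹) = (Finset.univ.filter fun k => σ₁ k = σ₂ k).card := by
  unfold fixCount
  refine Finset.card_bij' (fun i _ => σ₂⁻¹ i) (fun k _ => σ₂ k) ?_ ?_ ?_ ?_
  · intro i hi
    have h := (Finset.mem_filter.mp hi).2
    simp only [Equiv.Perm.mul_apply] at h
    refine Finset.mem_filter.mpr ⟨Finset.mem_univ _, ?_⟩
    rw [h]
    simp
  · intro k hk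
    have h := (Finset.mem_filter.mp hk).2
    refine Finset.mem_filter.mpr ⟨Finset.mem_univ _, ?_⟩
    simp [h]
  · intro i _; simp
  · intro k _; simp

lemma pow_eq_prod_ite {N : ℕ} (σ₁ σ₂ : Equiv.Perm (Fin N)) (x : ℂ) :
    x ^ (N - fixCount (σ₁ * σ₂⁻¹))
      = ∏ k : Fin N, if σ₁ k = σ₂ k then 1 else x := by
  rw [Finset.prod_ite, Finset.prod_const_one, Finset.prod_const, one_mul]
  congr 1
  rw [fixCount_eq σ₁ σ₂]
  have h := Finset.card_filter_add_card_filter_not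
    (s := (Finset.univ : Finset (Fin N))) (p := fun k => σ₁ k = σ₂ k)
  rw [Finset.card_univ, Fintype.card_fin] at h
  omega

lemma bracket {N M : ℕ} (V : Matrix (Fin N) (Fin M) ℂ) (l : Fin N → Fin M)
    (K J : Finset (Fin N)) :
    (∑ e : {x // x ∈ J} ≃ {x // x ∈ K}, ∏ k : {x // x ∈ J},
        (starRingEnd ℂ) (V (e k) (l k))) *
      (∑ e : {x // x ∈ J} ≃ {x // x ∈ K}, ∏ k : {x // x ∈ J}, V (e k) (l k)) *
      (∑ e : {x // x ∈ Jᶜ} ≃ {x // x ∈ Kᶜ}, ∏ k : {x // x ∈ Jᶜ},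
        ((‖V (e k) (l k)‖ ^ 2 : ℝ) : ℂ))
    = ((‖permOn (fun i j => V i (l j)) K J‖ ^ 2 *
        permOn (fun i j => ‖V i (l j)‖ ^ 2) Kᶜ Jᶜ : ℝ) : ℂ) := by
  rw [sum_equiv_prod_eq K J (fun i j => (starRingEnd ℂ) (V i (l j))),
      sum_equiv_prod_eq K J (fun i j => V i (l j)),
      sum_equiv_prod_eq Kᶜ Jᶜ (fun i j => ((‖V i (l j)‖ ^ 2 : ℝ) : ℂ))]
  have h1 : permOn (fun i j => (starRingEnd ℂ) (V i (l j))) K J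
      = (starRingEnd ℂ) (permOn (fun i j => V i (l j)) K J) :=
    (permOn_map (starRingEnd ℂ) (fun i j => V i (l j)) K J).symm
  have h2 : permOn (fun i j => ((‖V i (l j)‖ ^ 2 : ℝ) : ℂ)) Kᶜ Jᶜ
      = ((permOn (fun i j => ‖V i (l j)‖ ^ 2) Kᶜ Jᶜ : ℝ) : ℂ) :=
    (permOn_map Complex.ofRealHom (fun i j => ‖V i (l j)‖ ^ 2) Kᶜ Jᶜ).symm
  rw [h1, h2, conj_mul_self]
  push_cast
  ring

lemma stepC {N M : ℕ} (V : Matrix (Fin N) (Fin M) ℂ) (l : Fin N → Fin M)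
    (J : Finset (Fin N)) :
    ∑ σ₁ : Equiv.Perm (Fin N), ∑ σ₂ : Equiv.Perm (Fin N),
        ((∏ k ∈ J, (starRingEnd ℂ) (V (σ₁ k) (l k)) * V (σ₂ k) (l k)) *
          ∏ k ∈ Jᶜ, (if σ₁ k = σ₂ k then ((‖V (σ₁ k) (l k)‖ ^ 2 : ℝ) : ℂ) else 0))
      = ∑ K ∈ Finset.powersetCard J.card (Finset.univ : Finset (Fin N)),
          ((‖permOn (fun i j => V i (l j)) K J‖ ^ 2 *
            permOn (fun i j => ‖V i (l j)‖ ^ 2) Kᶜ Jᶜ : ℝ) : ℂ) := by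
  have h1 : ∀ σ₁ σ₂ : Equiv.Perm (Fin N),
      (∏ k ∈ J, (starRingEnd ℂ) (V (σ₁ k) (l k)) * V (σ₂ k) (l k))
        = ∏ k : {x // x ∈ J}, (starRingEnd ℂ) (V (σ₁ k) (l k)) * V (σ₂ k) (l k) :=
    fun _ _ => (Finset.prod_coe_sort _ _).symm
  have h2 : ∀ σ₁ σ₂ : Equiv.Perm (Fin N),
      (∏ k ∈ Jᶜ, (if σ₁ k = σ₂ k then ((‖V (σ₁ k) (l k)‖ ^ 2 : ℝ) : ℂ) else 0))
        = ∏ k : {x // x ∈ Jᶜ},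
            (if σ₁ k = σ₂ k then ((‖V (σ₁ k) (l k)‖ ^ 2 : ℝ) : ℂ) else 0) :=
    fun _ _ => (Finset.prod_coe_sort _ _).symm
  simp only [h1, h2]
  rw [core J (fun k i => (starRingEnd ℂ) (V i (l k))) (fun k i => V i (l k))
    (fun k i => ((‖V i (l k)‖ ^ 2 : ℝ) : ℂ))]
  exact Finset.sum_congr rfl fun K _ => bracket V l K J

/-- **Output probability with distinguishability function `J(σ) = x^{N-fix(σ)}` as a
binomial mixture of quantum and classical probabilities.**
For an `N × M` complex matrix `V`, any `l : {1,…,N} → {1,…,M}` and any real `x`,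
`Σ_{σ₁,σ₂ ∈ S_N} x^{N-fix(σ₁σ₂⁻¹)} ∏_k conj(V_{σ₁(k),l(k)}) V_{σ₂(k),l(k)}
 = Σ_{n=0}^{N} xⁿ(1-x)^{N-n} Σ_{K,J : |K|=|J|=n} |per V(K|l(J))|² · per W(Kᶜ|Jᶜ)`,
where `W i j = |V_{i,l(j)}|²`. -/
theorem partial_distinguishability_binomial_mixture (N M : ℕ)
    (V : Matrix (Fin N) (Fin M) ℂ) (l : Fin N → Fin M) (x : ℝ) :
    ∑ σ₁ : Equiv.Perm (Fin N), ∑ σ₂ : Equiv.Perm (Fin N),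
        (x : ℂ) ^ (N - fixCount (σ₁ * σ₂⁻¹)) *
          ∏ k : Fin N, (starRingEnd ℂ) (V (σ₁ k) (l k)) * V (σ₂ k) (l k) =
      ∑ n ∈ Finset.range (N + 1),
        (x : ℂ) ^ n * (1 - (x : ℂ)) ^ (N - n) *
          ∑ K ∈ Finset.powersetCard n (Finset.univ : Finset (Fin N)),
            ∑ J ∈ Finset.powersetCard n (Finset.univ : Finset (Fin N)),
              ((‖permOn (fun i j => V i (l j)) K J‖ ^ 2 *
                permOn (fun i j => ‖V i (l j)‖ ^ 2) Kᶜ Jᶜ : ℝ) : ℂ) := by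
  have stepA : ∀ σ₁ σ₂ : Equiv.Perm (Fin N),
      (x : ℂ) ^ (N - fixCount (σ₁ * σ₂⁻¹)) *
          ∏ k : Fin N, (starRingEnd ℂ) (V (σ₁ k) (l k)) * V (σ₂ k) (l k)
        = ∑ J ∈ (Finset.univ : Finset (Fin N)).powerset,
            ((x : ℂ) ^ J.card * (1 - (x : ℂ)) ^ (N - J.card)) *
              ((∏ k ∈ J, (starRingEnd ℂ) (V (σ₁ k) (l k)) * V (σ₂ k) (l k)) *
                ∏ k ∈ Jᶜ, (if σ₁ k = σ₂ k then ((‖V (σ₁ k) (l k)‖ ^ 2 : ℝ) : ℂ) else 0)) := by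
    intro σ₁ σ₂
    rw [pow_eq_prod_ite, ← Finset.prod_mul_distrib]
    have hpt : ∀ k : Fin N,
        (if σ₁ k = σ₂ k then (1 : ℂ) else (x : ℂ)) *
            ((starRingEnd ℂ) (V (σ₁ k) (l k)) * V (σ₂ k) (l k))
          = (x : ℂ) * ((starRingEnd ℂ) (V (σ₁ k) (l k)) * V (σ₂ k) (l k))
            + (1 - (x : ℂ)) *
                (if σ₁ k = σ₂ k then ((‖V (σ₁ k) (l k)‖ ^ 2 : ℝ) : ℂ) else 0) := by
      intro k
      split_ifs with h
      · rw [h, conj_mul_self]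
        ring
      · ring
    simp only [hpt]
    rw [Finset.prod_add]
    refine Finset.sum_congr rfl fun J hJ => ?_
    have hsd : (Finset.univ : Finset (Fin N)) \ J = Jᶜ :=
      (Finset.compl_eq_univ_sdiff J).symm
    have hA : (∏ k ∈ J, (x : ℂ) * ((starRingEnd ℂ) (V (σ₁ k) (l k)) * V (σ₂ k) (l k)))
        = (x : ℂ) ^ J.card *
            ∏ k ∈ J, ((starRingEnd ℂ) (V (σ₁ k) (l k)) * V (σ₂ k) (l k)) := by
      rw [Finset.prod_mul_distrib, Finset.prod_const]
    have hB : (∏ k ∈ Jᶜ, (1 - (x : ℂ)) *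
          (if σ₁ k = σ₂ k then ((‖V (σ₁ k) (l k)‖ ^ 2 : ℝ) : ℂ) else 0))
        = (1 - (x : ℂ)) ^ Jᶜ.card *
            ∏ k ∈ Jᶜ, (if σ₁ k = σ₂ k then ((‖V (σ₁ k) (l k)‖ ^ 2 : ℝ) : ℂ) else 0) := by
      rw [Finset.prod_mul_distrib, Finset.prod_const]
    have hcard : Jᶜ.card = N - J.card := by
      rw [Finset.card_compl, Fintype.card_fin]
    rw [hsd, hA, hB, hcard]
    ring
  simp only [stepA]
  calc ∑ σ₁ : Equiv.Perm (Fin N), ∑ σ₂ : Equiv.Perm (Fin N),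
        ∑ J ∈ (Finset.univ : Finset (Fin N)).powerset,
          ((x : ℂ) ^ J.card * (1 - (x : ℂ)) ^ (N - J.card)) *
            ((∏ k ∈ J, (starRingEnd ℂ) (V (σ₁ k) (l k)) * V (σ₂ k) (l k)) *
              ∏ k ∈ Jᶜ, (if σ₁ k = σ₂ k then ((‖V (σ₁ k) (l k)‖ ^ 2 : ℝ) : ℂ) else 0))
      = ∑ σ₁ : Equiv.Perm (Fin N), ∑ J ∈ (Finset.univ : Finset (Fin N)).powerset,
          ∑ σ₂ : Equiv.Perm (Fin N),
          ((x : ℂ) ^ J.card * (1 - (x : ℂ)) ^ (N - J.card)) *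
            ((∏ k ∈ J, (starRingEnd ℂ) (V (σ₁ k) (l k)) * V (σ₂ k) (l k)) *
              ∏ k ∈ Jᶜ, (if σ₁ k = σ₂ k then ((‖V (σ₁ k) (l k)‖ ^ 2 : ℝ) : ℂ) else 0)) :=
        Finset.sum_congr rfl fun σ₁ _ => Finset.sum_comm
    _ = ∑ J ∈ (Finset.univ : Finset (Fin N)).powerset,
          ∑ σ₁ : Equiv.Perm (Fin N), ∑ σ₂ : Equiv.Perm (Fin N),
          ((x : ℂ) ^ J.card * (1 - (x : ℂ)) ^ (N - J.card)) *
            ((∏ k ∈ J, (starRingEnd ℂ) (V (σ₁ k) (l k)) * V (σ₂ k) (l k)) *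
              ∏ k ∈ Jᶜ, (if σ₁ k = σ₂ k then ((‖V (σ₁ k) (l k)‖ ^ 2 : ℝ) : ℂ) else 0)) :=
        Finset.sum_comm
    _ = ∑ J ∈ (Finset.univ : Finset (Fin N)).powerset,
          ((x : ℂ) ^ J.card * (1 - (x : ℂ)) ^ (N - J.card)) *
            ∑ K ∈ Finset.powersetCard J.card (Finset.univ : Finset (Fin N)),
              ((‖permOn (fun i j => V i (l j)) K J‖ ^ 2 *
                permOn (fun i j => ‖V i (l j)‖ ^ 2) Kᶜ Jᶜ : ℝ) : ℂ) := by
        refine Finset.sum_congr rfl fun J _ => ?_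
        simp only [← Finset.mul_sum]
        congr 1
        exact stepC V l J
    _ = _ := by
        have hmap : ∀ J ∈ (Finset.univ : Finset (Fin N)).powerset,
            J.card ∈ Finset.range (N + 1) := fun J _ =>
          Finset.mem_range.mpr (Nat.lt_succ_of_le (by
            simpa using Finset.card_le_univ J))
        rw [← Finset.sum_fiberwise_of_maps_to hmap]
        refine Finset.sum_congr rfl fun n hn => ?_
        rw [← Finset.powersetCard_eq_filter]
        have hJn : ∀ J ∈ Finset.powersetCard n (Finset.univ : Finset (Fin N)),
            ((x : ℂ) ^ J.card * (1 - (x : ℂ)) ^ (N - J.card)) *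
              ∑ K ∈ Finset.powersetCard J.card (Finset.univ : Finset (Fin N)),
                ((‖permOn (fun i j => V i (l j)) K J‖ ^ 2 *
                  permOn (fun i j => ‖V i (l j)‖ ^ 2) Kᶜ Jᶜ : ℝ) : ℂ)
            = ((x : ℂ) ^ n * (1 - (x : ℂ)) ^ (N - n)) *
              ∑ K ∈ Finset.powersetCard n (Finset.univ : Finset (Fin N)),
                ((‖permOn (fun i j => V i (l j)) K J‖ ^ 2 *
                  permOn (fun i j => ‖V i (l j)‖ ^ 2) Kᶜ Jᶜ : ℝ) : ℂ) := by
          intro J hJ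
          rw [Finset.mem_powersetCard_univ.mp hJ]
        rw [Finset.sum_congr rfl hJn, ← Finset.mul_sum, Finset.sum_comm]
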